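/- If α is a cyclically-interval t-coloring of a tree H, then there exist vertices b′, b″ ∈ V(H) such that α[TP(b′,b″)] = {1,...,t}, i.e., the edges in TP(b′,b″) together receive all t colors. -/

import Mathlib

open SimpleGraph

/-- `Q` is a `t`-cyclic interval. -/
def IsCyclicInterval (t : ℕ) (Q : Set ℕ) : Prop :=
  ∃ i₁ ∈ Set.Icc 1 t, ∃ i₂ ∈ Set.Icc 1 t,
    Q = Set.Icc (min i₁ i₂) (max i₁ i₂) ∨
    Q = Set.Icc 1 t \ (Set.Icc (min i₁ i₂) (max i₁ i₂) \ {i₁, i₂})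

/-- A proper edge `t`-coloring: colors in `[1,t]`, adjacent edges differ, all colors used. -/
def IsProperEdgeColoring {V : Type*} (G : SimpleGraph V) (t : ℕ) (φ : Sym2 V → ℕ) : Prop :=
  (∀ e ∈ G.edgeSet, φ e ∈ Set.Icc 1 t) ∧
  (∀ e₁ ∈ G.edgeSet, ∀ e₂ ∈ G.edgeSet, e₁ ≠ e₂ → (∃ x, x ∈ e₁ ∧ x ∈ e₂) → φ e₁ ≠ φ e₂) ∧
  (∀ c ∈ Set.Icc 1 t, ∃ e ∈ G.edgeSet, φ e = c)

/-- A cyclically-interval `t`-coloring. -/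
def IsCyclicIntervalColoring {V : Type*} (G : SimpleGraph V) (t : ℕ) (φ : Sym2 V → ℕ) : Prop :=
  IsProperEdgeColoring G t φ ∧
  ∀ x : V, (G.incidenceSet x).Nonempty → IsCyclicInterval t (φ '' G.incidenceSet x)

/-- An interval `t`-coloring. -/
def IsIntervalColoring {V : Type*} (G : SimpleGraph V) (t : ℕ) (φ : Sym2 V → ℕ) : Prop :=
  IsProperEdgeColoring G t φ ∧
  ∀ x : V, (G.incidenceSet x).Nonempty → ∃ a b, φ '' G.incidenceSet x = Set.Icc a b

/-- `TP(u,v)` along a path `p`. -/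
def pathTP {V : Type*} (G : SimpleGraph V) {u v : V} (p : G.Walk u v) : Set (Sym2 V) :=
  if p.length ≤ 1 then {e | e ∈ p.edges}
  else ⋃ x ∈ {w | w ∈ p.support ∧ w ≠ u ∧ w ≠ v}, G.incidenceSet x

/-- `M(H)`: maximum of `|TP(b_i,b_j)|` over pairs of vertices. -/
noncomputable def treeM {V : Type*} (G : SimpleGraph V) : ℕ :=
  sSup {n | ∃ (u v : V) (p : G.Walk u v), p.IsPath ∧ (pathTP G p).ncard = n}

noncomputable def Wcyc {V : Type*} (G : SimpleGraph V) : ℕ :=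
  sSup {t | ∃ φ, IsCyclicIntervalColoring G t φ}

noncomputable def wcyc {V : Type*} (G : SimpleGraph V) : ℕ :=
  sInf {t | ∃ φ, IsCyclicIntervalColoring G t φ}

noncomputable def Wint {V : Type*} (G : SimpleGraph V) : ℕ :=
  sSup {t | ∃ φ, IsIntervalColoring G t φ}

noncomputable def wint {V : Type*} (G : SimpleGraph V) : ℕ :=
  sInf {t | ∃ φ, IsIntervalColoring G t φ}

/-- Chromatic index: least `n` admitting a proper edge coloring with colors in `[1,n]`. -/
noncomputable def chromIndex {V : Type*} (G : SimpleGraph V) : ℕ :=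
  sInf {n | ∃ φ : Sym2 V → ℕ, (∀ e ∈ G.edgeSet, φ e ∈ Set.Icc 1 n) ∧
    (∀ e₁ ∈ G.edgeSet, ∀ e₂ ∈ G.edgeSet, e₁ ≠ e₂ → (∃ x, x ∈ e₁ ∧ x ∈ e₂) → φ e₁ ≠ φ e₂)}


namespace CycProof


/-- cyclic distance from `a` to `x` going "up" in `{1,…,t}`. -/
def dd (t a x : ℕ) : ℕ := if a ≤ x then x - a else x + t - a

/-- cyclic interval from `a` to `b` in `{1,…,t}`. -/
def cyc (t a b : ℕ) : Set ℕ := {x | (1 ≤ x ∧ x ≤ t) ∧ dd t a x ≤ dd t a b}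

/-- `S` is cyclically connected around basepoint `a`. -/
def ConnA (t a : ℕ) (S : Set ℕ) : Prop := ∀ x ∈ S, cyc t a x ⊆ S ∨ cyc t x a ⊆ S

variable {t : ℕ}

lemma dd_self (a : ℕ) : dd t a a = 0 := by simp [dd]

lemma dd_lt (ha : 1 ≤ a ∧ a ≤ t) (hx : 1 ≤ x ∧ x ≤ t) : dd t a x < t := by
  unfold dd; split_ifs <;> omega

lemma dd_inj (ha : 1 ≤ a ∧ a ≤ t) (hx : 1 ≤ x ∧ x ≤ t) (hy : 1 ≤ y ∧ y ≤ t)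
    (h : dd t a x = dd t a y) : x = y := by
  unfold dd at h; split_ifs at h <;> omega

lemma exists_color (ha : 1 ≤ a ∧ a ≤ t) (hk : k < t) :
    ∃ y, (1 ≤ y ∧ y ≤ t) ∧ dd t a y = k := by
  refine ⟨if a + k ≤ t then a + k else a + k - t, ?_⟩
  unfold dd; split_ifs <;> omega

lemma mem_cyc (hx : x ∈ cyc t a b) : (1 ≤ x ∧ x ≤ t) ∧ dd t a x ≤ dd t a b := hx

lemma mem_cyc_iff : x ∈ cyc t a b ↔ (1 ≤ x ∧ x ≤ t) ∧ dd t a x ≤ dd t a b := Iff.rfl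

lemma DD2 (ha : 1 ≤ a ∧ a ≤ t) (hp : 1 ≤ p ∧ p ≤ t) (hq : 1 ≤ q ∧ q ≤ t)
    (h : dd t a p ≤ dd t a q) : dd t p q = dd t a q - dd t a p := by
  unfold dd at *; split_ifs at * <;> omega

lemma DD3 (ha : 1 ≤ a ∧ a ≤ t) (hp : 1 ≤ p ∧ p ≤ t) (h : 0 < dd t a p) :
    dd t p a = t - dd t a p := by
  unfold dd at *; split_ifs at * <;> omega

/-- transitivity: if `x ∈ cyc a b` then `cyc a x ⊆ cyc a b`. -/
lemma cyc_trans (hx : x ∈ cyc t a b) : cyc t a x ⊆ cyc t a b := by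
  intro z hz; exact ⟨hz.1, le_trans hz.2 hx.2⟩

/-- `cyc a x ⊆ cyc a y ∪ cyc y x`. -/
lemma chain3 (ha : 1 ≤ a ∧ a ≤ t) (hx : 1 ≤ x ∧ x ≤ t) (hy : 1 ≤ y ∧ y ≤ t) :
    cyc t a x ⊆ cyc t a y ∪ cyc t y x := by
  intro z hz
  obtain ⟨hzr, hzd⟩ := hz
  by_cases h : dd t a z ≤ dd t a y
  · exact Or.inl ⟨hzr, h⟩
  · refine Or.inr ⟨hzr, ?_⟩
    unfold dd at *; split_ifs at * <;> omega

/-- if `dd y p ≤ dd y q` then `cyc p q ⊆ cyc y q`. -/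
lemma sub2 (hy : 1 ≤ y ∧ y ≤ t) (hp : 1 ≤ p ∧ p ≤ t) (hq : 1 ≤ q ∧ q ≤ t)
    (h : dd t y p ≤ dd t y q) : cyc t p q ⊆ cyc t y q := by
  intro z hz
  obtain ⟨hzr, hzd⟩ := hz
  refine ⟨hzr, ?_⟩
  unfold dd at *; split_ifs at * <;> omega

/-- if `dd a y < dd a x` then `cyc x a ⊆ cyc x y`. -/
lemma L1 (ha : 1 ≤ a ∧ a ≤ t) (hx : 1 ≤ x ∧ x ≤ t) (hy : 1 ≤ y ∧ y ≤ t)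
    (h : dd t a y < dd t a x) : cyc t x a ⊆ cyc t x y := by
  intro z hz
  obtain ⟨hzr, hzd⟩ := hz
  refine ⟨hzr, ?_⟩
  unfold dd at *; split_ifs at * <;> omega

/-- a cyclic interval is cyclically connected around any of its points. -/
lemma arc_conn (hu : 1 ≤ u ∧ u ≤ t) (hv : 1 ≤ v ∧ v ≤ t) (ha : a ∈ cyc t u v) :
    ConnA t a (cyc t u v) := by
  intro x hx
  obtain ⟨har, had⟩ := ha
  obtain ⟨hxr, hxd⟩ := hx
  by_cases h : dd t u a ≤ dd t u x
  · left; intro z hz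
    obtain ⟨hzr, hzd⟩ := hz
    refine ⟨hzr, ?_⟩
    unfold dd at *; split_ifs at * <;> omega
  · right; intro z hz
    obtain ⟨hzr, hzd⟩ := hz
    refine ⟨hzr, ?_⟩
    unfold dd at *; split_ifs at * <;> omega

lemma conn_union (h1 : ConnA t a S) (h2 : ConnA t a T) : ConnA t a (S ∪ T) := by
  intro x hx
  rcases hx with hx | hx
  · rcases h1 x hx with h | h
    · exact Or.inl (h.trans Set.subset_union_left)
    · exact Or.inr (h.trans Set.subset_union_left)
  · rcases h2 x hx with h | h
    · exact Or.inl (h.trans Set.subset_union_right)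
    · exact Or.inr (h.trans Set.subset_union_right)

/-- extending a cyclically connected set by an intersecting cyclic interval. -/
lemma conn_union_arc (ha : 1 ≤ a ∧ a ≤ t) (hSr : S ⊆ Set.Icc 1 t)
    (hS : ConnA t a S) (haS : a ∈ S)
    (hu : 1 ≤ u ∧ u ≤ t) (hv : 1 ≤ v ∧ v ≤ t)
    (hy : y ∈ S) (hyB : y ∈ cyc t u v) : ConnA t a (S ∪ cyc t u v) := by
  have hyr : 1 ≤ y ∧ y ≤ t := by have := hSr hy; simpa [Set.mem_Icc] using this
  intro x hx
  rcases hx with hx | hx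
  · rcases hS x hx with h | h
    · exact Or.inl (h.trans Set.subset_union_left)
    · exact Or.inr (h.trans Set.subset_union_left)
  · -- x in the arc B
    have hxr : 1 ≤ x ∧ x ≤ t := hx.1
    have hB := arc_conn hu hv hyB x hx
    rcases hS y hy with hSy | hSy
    · rcases hB with hBx | hBx
      · -- cyc a y ⊆ S, cyc y x ⊆ B
        exact Or.inl ((chain3 ha hxr hyr).trans (Set.union_subset_union hSy hBx))
      · -- cyc a y ⊆ S, cyc x y ⊆ B
        by_cases h : dd t a x ≤ dd t a y
        · exact Or.inl ((cyc_trans ⟨hxr, h⟩).trans (hSy.trans Set.subset_union_left))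
        · exact Or.inr ((L1 ha hxr hyr (by omega)).trans (hBx.trans Set.subset_union_right))
    · rcases hB with hBx | hBx
      · -- cyc y a ⊆ S, cyc y x ⊆ B
        by_cases h : dd t y x ≤ dd t y a
        · exact Or.inr ((sub2 hyr hxr ha h).trans (hSy.trans Set.subset_union_left))
        · exact Or.inl ((sub2 hyr ha hxr (by omega)).trans (hBx.trans Set.subset_union_right))
      · -- cyc y a ⊆ S, cyc x y ⊆ B
        refine Or.inr ((chain3 hxr ha hyr).trans ?_)
        rw [Set.union_comm]
        exact Set.union_subset_union hSy hBx


lemma ncard_Iic' (n : ℕ) : (Set.Iic n).ncard = n + 1 := by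
  rw [← Finset.coe_Iic, Set.ncard_coe_finset, Nat.card_Iic]

lemma ncard_Icc' (a b : ℕ) : (Set.Icc a b).ncard = b + 1 - a := by
  rw [← Finset.coe_Icc, Set.ncard_coe_finset, Nat.card_Icc]

lemma cyc_eq_Icc (h1 : 1 ≤ u) (h2 : u ≤ v) (h3 : v ≤ t) : cyc t u v = Set.Icc u v := by
  ext x
  simp only [cyc, Set.mem_setOf_eq, Set.mem_Icc, dd]
  split_ifs <;> omega

lemma cyc_wrap (h1 : 1 ≤ m) (h2 : m < M) (h3 : M ≤ t) :
    cyc t M m = Set.Icc 1 t \ (Set.Icc m M \ {m, M}) := by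
  ext x
  simp only [cyc, Set.mem_setOf_eq, Set.mem_Icc, Set.mem_diff, Set.mem_insert_iff,
    Set.mem_singleton_iff, dd]
  split_ifs <;> omega

lemma cyc_full (ht : 1 ≤ t) : cyc t 1 t = Set.Icc 1 t := by
  rw [cyc_eq_Icc le_rfl ht le_rfl]

/-- The main circle-counting contradiction. -/
lemma circle_main (ht : 1 ≤ t) (ha : 1 ≤ a ∧ a ≤ t) (hc : 1 ≤ c ∧ c ≤ t)
    {L R T : Set ℕ}
    (hLr : L ⊆ Set.Icc 1 t) (hRr : R ⊆ Set.Icc 1 t) (hTr : T ⊆ Set.Icc 1 t)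
    (hLc : ConnA t a L) (hRc : ConnA t a R) (hTc : ConnA t a T)
    (haL : a ∈ L) (haR : a ∈ R) (haT : a ∈ T)
    (hcT : c ∈ T) (hcLR : c ∉ L ∪ R)
    (hLT : (L ∪ T).ncard ≤ (L ∪ R).ncard)
    (hRT : (R ∪ T).ncard ≤ (L ∪ R).ncard) : False := by
  classical
  have hfin : (Set.Icc 1 t : Set ℕ).Finite := Set.finite_Icc 1 t
  have hinj : Set.InjOn (dd t a) (Set.Icc 1 t) := by
    intro x hx y hy h
    exact dd_inj ha (by simpa [Set.mem_Icc] using hx) (by simpa [Set.mem_Icc] using hy) h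
  have hdc_pos : 0 < dd t a c := by
    rcases Nat.eq_zero_or_pos (dd t a c) with h | h
    · exfalso
      have : c = a := dd_inj ha hc ha (by rw [h, dd_self])
      exact hcLR (Or.inl (this ▸ haL))
    · exact h
  have hdct : dd t a c < t := dd_lt ha hc
  -- generic: a Conn set containing a, avoiding c, with image described
  -- right end for U = L ∪ R
  set U := L ∪ R with hU
  have hUr : U ⊆ Set.Icc 1 t := Set.union_subset hLr hRr
  have hUc : ConnA t a U := conn_union hLc hRc
  have hrange : ∀ x ∈ U, 1 ≤ x ∧ x ≤ t := fun x hx => by simpa [Set.mem_Icc] using hUr hx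
  -- the set of "right" levels
  set E := {k | k < dd t a c ∧ ∃ x ∈ U, dd t a x = k} with hE
  have hE0 : 0 ∈ E := ⟨hdc_pos, a, Or.inl haL, dd_self a⟩
  have hEbdd : BddAbove E := ⟨dd t a c, fun k hk => le_of_lt hk.1⟩
  set rU := sSup E with hrU
  obtain ⟨hrUlt, x₀, hx₀U, hx₀d⟩ : rU ∈ E := Nat.sSup_mem ⟨0, hE0⟩ hEbdd
  have hx₀r : 1 ≤ x₀ ∧ x₀ ≤ t := hrange x₀ hx₀U
  -- the right segment is inside L or R entirely
  have key_right : ∀ S, S ⊆ Set.Icc 1 t → ConnA t a S → x₀ ∈ S → c ∉ S →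
      cyc t a x₀ ⊆ S := by
    intro S hSr hSc hxS hcS
    rcases Nat.eq_zero_or_pos (dd t a x₀) with h0 | h0
    · have hx0a : x₀ = a := dd_inj ha hx₀r ha (by rw [h0, dd_self])
      intro z hz
      have hz0 : dd t a z = 0 := by
        have := hz.2
        rw [hx0a, dd_self] at this
        omega
      have : z = a := dd_inj ha hz.1 ha (by rw [hz0, dd_self])
      rw [this, ← hx0a]
      exact hxS
    · rcases hSc x₀ hxS with h | h
      · exact h
      · exfalso
        apply hcS
        apply h
        refine ⟨hc, ?_⟩
        have e1 : dd t x₀ c = dd t a c - dd t a x₀ := DD2 ha hx₀r hc (by omega)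
        have e2 : dd t x₀ a = t - dd t a x₀ := DD3 ha hx₀r h0
        omega
  have hseg_right : cyc t a x₀ ⊆ L ∨ cyc t a x₀ ⊆ R := by
    rcases hx₀U with h | h
    · exact Or.inl (key_right L hLr hLc h (fun hc' => hcLR (Or.inl hc')))
    · exact Or.inr (key_right R hRr hRc h (fun hc' => hcLR (Or.inr hc')))
  -- image of the right segment
  have him_right : ∀ S, cyc t a x₀ ⊆ S → Set.Iic rU ⊆ (dd t a) '' S := by
    intro S hS k hk
    have hk' : k ≤ rU := Set.mem_Iic.mp hk
    obtain ⟨y, hyr, hyd⟩ := exists_color (t := t) ha (k := k) (by omega)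
    refine ⟨y, hS ⟨hyr, ?_⟩, hyd⟩
    rw [hyd, hx₀d]
    omega
  -- wrap levels
  set W := {k | dd t a c < k ∧ ∃ x ∈ U, dd t a x = k} with hW
  -- image of U is controlled
  have himU : ∀ x ∈ U, dd t a x ≤ rU ∨ (W.Nonempty ∧ sInf W ≤ dd t a x) := by
    intro x hx
    have hxr := hrange x hx
    rcases lt_trichotomy (dd t a x) (dd t a c) with h | h | h
    · exact Or.inl (le_csSup hEbdd ⟨h, x, hx, rfl⟩)
    · exact absurd (dd_inj ha hxr hc h) (fun e => hcLR (e ▸ hx))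
    · exact Or.inr ⟨⟨dd t a x, h, x, hx, rfl⟩, Nat.sInf_le ⟨h, x, hx, rfl⟩⟩
  -- counting upper bound for U
  have hUfin : U.Finite := hfin.subset hUr
  have hLTfin : (L ∪ T).Finite := hfin.subset (Set.union_subset hLr hTr)
  have hRTfin : (R ∪ T).Finite := hfin.subset (Set.union_subset hRr hTr)
  have hncard_img : ∀ S : Set ℕ, S ⊆ Set.Icc 1 t → S.ncard = ((dd t a) '' S).ncard := by
    intro S hS
    exact (Set.ncard_image_of_injOn (hinj.mono hS)).symm
  -- counting upper bound for U
  have hUbound : (W.Nonempty ∧ U.ncard ≤ rU + 1 + (t - sInf W)) ∨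
      (¬ W.Nonempty ∧ U.ncard ≤ rU + 1) := by
    by_cases hWne : W.Nonempty
    · left
      refine ⟨hWne, ?_⟩
      have himg : (dd t a) '' U ⊆ Set.Iic rU ∪ Set.Icc (sInf W) (t - 1) := by
        rintro k ⟨x, hx, rfl⟩
        rcases himU x hx with h | ⟨_, h⟩
        · exact Or.inl (Set.mem_Iic.mpr h)
        · exact Or.inr (Set.mem_Icc.mpr ⟨h, by have := dd_lt ha (hrange x hx); omega⟩)
      calc U.ncard = ((dd t a) '' U).ncard := hncard_img U hUr
        _ ≤ (Set.Iic rU ∪ Set.Icc (sInf W) (t - 1)).ncard :=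
            Set.ncard_le_ncard himg ((Set.finite_Iic _).union (Set.finite_Icc _ _))
        _ ≤ (Set.Iic rU).ncard + (Set.Icc (sInf W) (t - 1)).ncard := Set.ncard_union_le _ _
        _ ≤ rU + 1 + (t - sInf W) := by rw [ncard_Iic', ncard_Icc']; omega
    · right
      refine ⟨hWne, ?_⟩
      have himg : (dd t a) '' U ⊆ Set.Iic rU := by
        rintro k ⟨x, hx, rfl⟩
        rcases himU x hx with h | ⟨h, _⟩
        · exact Set.mem_Iic.mpr h
        · exact absurd h hWne
      calc U.ncard = ((dd t a) '' U).ncard := hncard_img U hUr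
        _ ≤ (Set.Iic rU).ncard := Set.ncard_le_ncard himg (Set.finite_Iic _)
        _ = rU + 1 := ncard_Iic' _
  -- images of unions with T
  have himUnion : ∀ (S S' : Set ℕ), S ⊆ Set.Icc 1 t → S' ⊆ Set.Icc 1 t →
      ∀ (B : Set ℕ), B ⊆ (dd t a) '' S ∪ (dd t a) '' S' → B.ncard ≤ (S ∪ S').ncard := by
    intro S S' hSr hS'r B hB
    have : B ⊆ (dd t a) '' (S ∪ S') := by
      rw [Set.image_union]
      exact hB
    calc B.ncard ≤ ((dd t a) '' (S ∪ S')).ncard :=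
          Set.ncard_le_ncard this (((hfin.subset hSr).union (hfin.subset hS'r)).image _)
      _ = (S ∪ S').ncard := (hncard_img _ (Set.union_subset hSr hS'r)).symm
  -- T's direction at c
  rcases hTc c hcT with hT1 | hT1
  · -- cyc a c ⊆ T : image T covers [0, dc]
    have himT : Set.Iic (dd t a c) ⊆ (dd t a) '' T := by
      intro k hk
      have hk' : k ≤ dd t a c := Set.mem_Iic.mp hk
      obtain ⟨y, hyr, hyd⟩ := exists_color (t := t) ha (k := k) (by omega)
      exact ⟨y, hT1 ⟨hyr, by rw [hyd]; exact hk'⟩, hyd⟩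
    rcases hUbound with ⟨hWne, hUb⟩ | ⟨hWne, hUb⟩
    · -- wrap witness
      obtain ⟨hwgt, w₀, hw₀U, hw₀d⟩ : sInf W ∈ W := Nat.sInf_mem hWne
      have hw₀r : 1 ≤ w₀ ∧ w₀ ≤ t := hrange w₀ hw₀U
      have hwlt : sInf W < t := by have := dd_lt ha hw₀r; omega
      have key_wrap : ∀ S, ConnA t a S → w₀ ∈ S → c ∉ S → cyc t w₀ a ⊆ S := by
        intro S hSc hwS hcS
        rcases hSc w₀ hwS with h | h
        · exact absurd (h ⟨hc, by rw [hw₀d]; omega⟩) hcS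
        · exact h
      have him_wrap : ∀ S, cyc t w₀ a ⊆ S → Set.Icc (sInf W) (t-1) ⊆ (dd t a) '' S := by
        intro S hS k hk
        obtain ⟨hk1, hk2⟩ := Set.mem_Icc.mp hk
        obtain ⟨y, hyr, hyd⟩ := exists_color (t := t) ha (k := k) (by omega)
        refine ⟨y, hS ⟨hyr, ?_⟩, hyd⟩
        have e1 : dd t w₀ y = k - sInf W := by
          have := DD2 ha hw₀r hyr (by omega)
          rw [hyd, hw₀d] at this
          omega
        have e2 : dd t w₀ a = t - sInf W := by
          have := DD3 ha hw₀r (by omega)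
          rw [hw₀d] at this
          omega
        omega
      -- partner set containing the wrap
      have hpart : ∃ S', S' ⊆ Set.Icc 1 t ∧ (S' ∪ T).ncard ≤ U.ncard ∧
          cyc t w₀ a ⊆ S' := by
        rcases hw₀U with h | h
        · exact ⟨L, hLr, hLT, key_wrap L hLc h (fun h' => hcLR (Or.inl h'))⟩
        · exact ⟨R, hRr, hRT, key_wrap R hRc h (fun h' => hcLR (Or.inr h'))⟩
      obtain ⟨S', hS'r, hS'card, hS'wrap⟩ := hpart
      have hbig : Set.Iic (dd t a c) ∪ Set.Icc (sInf W) (t-1) ⊆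
          (dd t a) '' S' ∪ (dd t a) '' T := by
        rintro k (hk | hk)
        · exact Or.inr (himT hk)
        · exact Or.inl (him_wrap S' hS'wrap hk)
      have hcount : (Set.Iic (dd t a c) ∪ Set.Icc (sInf W) (t-1)).ncard =
          (dd t a c + 1) + (t - sInf W) := by
        rw [Set.ncard_union_eq ?_ (Set.finite_Iic _) (Set.finite_Icc _ _),
          ncard_Iic', ncard_Icc']
        · omega
        · rw [Set.disjoint_left]
          intro k hk hk2
          have := Set.mem_Iic.mp hk
          have := (Set.mem_Icc.mp hk2).1
          omega
      have := himUnion S' T hS'r hTr _ hbig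
      rw [hcount] at this
      omega
    · -- no wrap
      have hbig : Set.Iic (dd t a c) ⊆ (dd t a) '' L ∪ (dd t a) '' T :=
          fun k hk => Or.inr (himT hk)
      have := himUnion L T hLr hTr _ hbig
      rw [ncard_Iic'] at this
      omega
  · -- cyc c a ⊆ T : image T covers [dc, t-1]
    have himT : Set.Icc (dd t a c) (t-1) ⊆ (dd t a) '' T := by
      intro k hk
      obtain ⟨hk1, hk2⟩ := Set.mem_Icc.mp hk
      obtain ⟨y, hyr, hyd⟩ := exists_color (t := t) ha (k := k) (by omega)
      refine ⟨y, hT1 ⟨hyr, ?_⟩, hyd⟩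
      have e1 : dd t c y = k - dd t a c := by
        have := DD2 ha hc hyr (by omega)
        rw [hyd] at this
        omega
      have e2 : dd t c a = t - dd t a c := DD3 ha hc (by omega)
      omega
    have hpart : ∃ S', S' ⊆ Set.Icc 1 t ∧ (S' ∪ T).ncard ≤ U.ncard ∧
        cyc t a x₀ ⊆ S' := by
      rcases hseg_right with h | h
      · exact ⟨L, hLr, hLT, h⟩
      · exact ⟨R, hRr, hRT, h⟩
    obtain ⟨S', hS'r, hS'card, hS'seg⟩ := hpart
    have hbig : Set.Iic rU ∪ Set.Icc (dd t a c) (t-1) ⊆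
        (dd t a) '' S' ∪ (dd t a) '' T := by
      rintro k (hk | hk)
      · exact Or.inl (him_right S' hS'seg hk)
      · exact Or.inr (himT hk)
    have hcount : (Set.Iic rU ∪ Set.Icc (dd t a c) (t-1)).ncard =
        (rU + 1) + (t - dd t a c) := by
      rw [Set.ncard_union_eq ?_ (Set.finite_Iic _) (Set.finite_Icc _ _),
        ncard_Iic', ncard_Icc']
      · omega
      · rw [Set.disjoint_left]
        intro k hk hk2
        have := Set.mem_Iic.mp hk
        have := (Set.mem_Icc.mp hk2).1
        omega
    have hfinal := himUnion S' T hS'r hTr _ hbig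
    rw [hcount] at hfinal
    rcases hUbound with ⟨hWne, hUb⟩ | ⟨hWne, hUb⟩
    · obtain ⟨hwgt, w₀, hw₀U, hw₀d⟩ : sInf W ∈ W := Nat.sInf_mem hWne
      have hwlt : sInf W < t := by have := dd_lt ha (hrange w₀ hw₀U); omega
      omega
    · omega



section Graph

open SimpleGraph Walk

variable {V : Type*} {H : SimpleGraph V} {t : ℕ} {φ : Sym2 V → ℕ}

/-- the palette of a vertex. -/
def pal (H : SimpleGraph V) (φ : Sym2 V → ℕ) (x : V) : Set ℕ := φ '' H.incidenceSet x

/-- union of palettes along a walk. -/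
def USet (H : SimpleGraph V) (φ : Sym2 V → ℕ) {u v : V} (q : H.Walk u v) : Set ℕ :=
  {c | ∃ w ∈ q.support, c ∈ pal H φ w}

lemma mem_incidence_struct {e : Sym2 V} {u : V} (he : e ∈ H.incidenceSet u) :
    ∃ y, H.Adj u y ∧ e = s(u, y) := by
  obtain ⟨hes, hue⟩ := he
  induction e with
  | _ a b =>
    rw [SimpleGraph.mem_edgeSet] at hes
    rcases Sym2.mem_iff.mp hue with rfl | rfl
    · exact ⟨b, hes, rfl⟩
    · exact ⟨a, hes.symm, Sym2.eq_swap⟩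

variable (hp : IsProperEdgeColoring H t φ)

section
include hp

lemma pal_sub (x : V) : pal H φ x ⊆ Set.Icc 1 t := by
  rintro c ⟨e, he, rfl⟩
  exact hp.1 e he.1

lemma USet_sub {u v : V} (q : H.Walk u v) : USet H φ q ⊆ Set.Icc 1 t := by
  rintro c ⟨w, _, hc⟩
  exact pal_sub hp w hc

end

lemma adj_color_mem {x y : V} (h : H.Adj x y) :
    φ s(x, y) ∈ pal H φ x ∧ φ s(x, y) ∈ pal H φ y :=
  ⟨⟨s(x, y), (H.mk'_mem_incidenceSet_left_iff).mpr h, rfl⟩,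
   ⟨s(x, y), (H.mk'_mem_incidenceSet_right_iff).mpr h, rfl⟩⟩

lemma USet_nil {v : V} : USet H φ (Walk.nil : H.Walk v v) = pal H φ v := by
  ext c; simp [USet]

lemma USet_cons {x y v : V} (h : H.Adj x y) (q : H.Walk y v) :
    USet H φ (Walk.cons h q) = pal H φ x ∪ USet H φ q := by
  ext c; simp [USet, Walk.support_cons]

lemma USet_append {u v w : V} (p : H.Walk u v) (q : H.Walk v w) :
    USet H φ (p.append q) = USet H φ p ∪ USet H φ q := by
  ext c
  simp only [USet, Set.mem_setOf_eq, Set.mem_union, Walk.mem_support_append_iff]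
  constructor
  · rintro ⟨w', h | h, hc⟩
    · exact Or.inl ⟨w', h, hc⟩
    · exact Or.inr ⟨w', h, hc⟩
  · rintro (⟨w', h, hc⟩ | ⟨w', h, hc⟩)
    · exact ⟨w', Or.inl h, hc⟩
    · exact ⟨w', Or.inr h, hc⟩

lemma USet_reverse {u v : V} (p : H.Walk u v) : USet H φ p.reverse = USet H φ p := by
  ext c; simp [USet, Walk.support_reverse]

lemma mem_USet_start {u v : V} (q : H.Walk u v) {c : ℕ} (hc : c ∈ pal H φ u) :
    c ∈ USet H φ q := ⟨u, q.start_mem_support, hc⟩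

lemma mem_USet_end {u v : V} (q : H.Walk u v) {c : ℕ} (hc : c ∈ pal H φ v) :
    c ∈ USet H φ q := ⟨v, q.end_mem_support, hc⟩

/-- a palette of a vertex with an incident edge is a cyclic interval `cyc t u v`. -/
lemma pal_arc (hφ : IsCyclicIntervalColoring H t φ) {x : V}
    (hne : (H.incidenceSet x).Nonempty) :
    ∃ i j, (1 ≤ i ∧ i ≤ t) ∧ (1 ≤ j ∧ j ≤ t) ∧ pal H φ x = cyc t i j := by
  obtain ⟨i₁, hi₁, i₂, hi₂, h | h⟩ := hφ.2 x hne
  · rw [Set.mem_Icc] at hi₁ hi₂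
    refine ⟨min i₁ i₂, max i₁ i₂, ⟨by omega, by omega⟩, ⟨by omega, by omega⟩, ?_⟩
    rw [pal, h, cyc_eq_Icc (by omega) (by omega) (by omega)]
  · rw [Set.mem_Icc] at hi₁ hi₂
    rcases eq_or_lt_of_le (min_le_max (a := i₁) (b := i₂)) with heq | hlt
    · refine ⟨1, t, ⟨le_rfl, by omega⟩, ⟨by omega, le_rfl⟩, ?_⟩
      rw [pal, h, cyc_full (by omega)]
      have h12 : i₁ = i₂ := by
        rcases le_total i₁ i₂ with h' | h' <;> simp [min_def, max_def, h'] at heq <;> omega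
      subst h12
      simp
    · refine ⟨max i₁ i₂, min i₁ i₂, ⟨by omega, by omega⟩, ⟨by omega, by omega⟩, ?_⟩
      rw [pal, h, cyc_wrap (by omega) hlt (by omega)]
      have : ({i₁, i₂} : Set ℕ) = {min i₁ i₂, max i₁ i₂} := by
        rcases le_total i₁ i₂ with h' | h'
        · simp [min_eq_left h', max_eq_right h']
        · rw [Set.pair_comm]
          simp [min_eq_right h', max_eq_left h']
      rw [this]

/-- every vertex has an incident edge, given connectivity and an edge somewhere. -/
lemma incidence_nonempty (hconn : H.Connected) {p q : V} (hpq : H.Adj p q) (x : V) :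
    (H.incidenceSet x).Nonempty := by
  obtain ⟨wlk⟩ := hconn x p
  cases wlk with
  | nil => exact ⟨s(_, q), (H.mk'_mem_incidenceSet_left_iff).mpr hpq⟩
  | cons h _ => exact ⟨s(x, _), (H.mk'_mem_incidenceSet_left_iff).mpr h⟩

/-- union of palettes along a walk ending at `v` is cyclically connected around any `a`
in the palette of `v`. -/
lemma USet_conn (hφ : IsCyclicIntervalColoring H t φ) (hconn : H.Connected)
    {p q : V} (hpq : H.Adj p q) {a : ℕ}
    {y v : V} (wlk : H.Walk y v) (ha : a ∈ pal H φ v) : ConnA t a (USet H φ wlk) := by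
  induction wlk with
  | nil =>
    rw [USet_nil]
    obtain ⟨i, j, hi, hj, harc⟩ := pal_arc hφ (incidence_nonempty hconn hpq _)
    rw [harc] at ha ⊢
    exact arc_conn hi hj ha
  | @cons x x' v h wlk' ih =>
    rw [USet_cons]
    rw [Set.union_comm]
    obtain ⟨i, j, hi, hj, harc⟩ := pal_arc hφ (incidence_nonempty hconn hpq x)
    rw [harc]
    have hshare := adj_color_mem (φ := φ) h
    refine conn_union_arc ?_ (USet_sub hφ.1 wlk') (ih ha) (mem_USet_end wlk' ha)
      hi hj (y := φ s(x, x')) (mem_USet_start wlk' hshare.2) (harc ▸ hshare.1)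
    have := pal_sub hφ.1 v ha
    simpa [Set.mem_Icc] using this

/-- appending two paths whose supports only share the junction is a path. -/
lemma isPath_append' {u v w : V} {p : H.Walk u v} {q : H.Walk v w}
    (hpp : p.IsPath) (hq : q.IsPath)
    (hdisj : ∀ x, x ∈ p.support → x ∈ q.support → x = v) : (p.append q).IsPath := by
  rw [Walk.isPath_def, Walk.support_append]
  refine List.Nodup.append hpp.support_nodup ?_ ?_
  · have := hq.support_nodup
    rw [q.support_eq_cons] at this
    exact this.of_cons
  · intro x hx hx2
    have hxq : x ∈ q.support := by
      rw [q.support_eq_cons]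
      exact List.mem_cons_of_mem _ hx2
    have hxv : x = v := hdisj x hx hxq
    subst hxv
    have := hq.support_nodup
    rw [q.support_eq_cons] at this
    exact (List.nodup_cons.mp this).1 hx2

/-- prefix of a walk up to the first vertex lying in `S`. -/
lemma exists_prefix (S : Set V) :
    ∀ {z u : V} (q : H.Walk z u), u ∈ S →
      ∃ v, ∃ r : H.Walk z v, v ∈ S ∧ (∀ x ∈ r.support, x ∈ S → x = v) ∧
        (∀ x ∈ r.support, x ∈ q.support) ∧ (q.IsPath → r.IsPath) := by
  intro z u q
  induction q with
  | nil =>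
    intro hu
    exact ⟨_, Walk.nil, hu, by simp, by simp, fun _ => Walk.IsPath.nil⟩
  | @cons c c' c'' h q' ih =>
    intro hu
    by_cases hc : c ∈ S
    · exact ⟨c, Walk.nil, hc, by simp, by simp, fun _ => Walk.IsPath.nil⟩
    · obtain ⟨v, r, hv, honly, hsub, hpath⟩ := ih hu
      refine ⟨v, Walk.cons h r, hv, ?_, ?_, ?_⟩
      · intro x hx hxS
        rw [Walk.support_cons, List.mem_cons] at hx
        rcases hx with rfl | hx
        · exact absurd hxS hc
        · exact honly x hx hxS
      · intro x hx
        rw [Walk.support_cons, List.mem_cons] at hx ⊢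
        rcases hx with rfl | hx
        · exact Or.inl rfl
        · exact Or.inr (hsub x hx)
      · intro hq
        rw [Walk.cons_isPath_iff] at hq ⊢
        exact ⟨hpath hq.1, fun hcr => hq.2 (hsub c hcr)⟩


/-- At a lexicographically maximal path, the start vertex has a unique incident edge. -/
lemma end_step {V : Type*} [Fintype V] [DecidableEq V] {H : SimpleGraph V} (hH : H.IsTree) {t : ℕ}
    {φ : Sym2 V → ℕ} (hφ : IsCyclicIntervalColoring H t φ) {N Lm : ℕ}
    (hNub : ∀ {x y : V} (q : H.Walk x y), q.IsPath → (USet H φ q).ncard ≤ N)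
    (hLub : ∀ {x y : V} (q : H.Walk x y), q.IsPath → (USet H φ q).ncard = N → q.length ≤ Lm)
    {u w : V} (P : H.Walk u w) (hP : P.IsPath) (hPcard : (USet H φ P).ncard = N)
    (hPlen : P.length = Lm) (h1 : 1 ≤ P.length) :
    ∃ (u1 : V) (h : H.Adj u u1) (P' : H.Walk u1 w), P = Walk.cons h P' ∧
      (∀ e ∈ H.incidenceSet u, e = s(u, u1)) ∧ pal H φ u ⊆ pal H φ u1 := by
  cases P with
  | nil => simp at h1
  | @cons _ u1 _ h P' =>
    refine ⟨u1, h, P', rfl, ?_⟩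
    have huniq : ∀ e ∈ H.incidenceSet u, e = s(u, u1) := by
      intro e he
      obtain ⟨y, hy, rfl⟩ := mem_incidence_struct he
      by_contra hne
      have hyu1 : y ≠ u1 := fun hy1 => hne (by rw [hy1])
      have hyP' : y ∉ P'.support := by
        intro hyP'
        obtain ⟨pp, hpp, hppuniq⟩ := hH.existsUnique_path u y
        have hA : (Walk.cons hy Walk.nil : H.Walk u y).IsPath := by simp [hy.ne]
        have hB : (Walk.cons h (P'.takeUntil y hyP')).IsPath := by
          rw [Walk.cons_isPath_iff] at hP ⊢
          exact ⟨hP.1.takeUntil hyP', fun hmem => hP.2 (P'.support_takeUntil_subset hyP' hmem)⟩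
        have hAB := (hppuniq _ hA).trans (hppuniq _ hB).symm
        have hlen : (1 : ℕ) = (P'.takeUntil y hyP').length + 1 := by
          have := congrArg Walk.length hAB
          simpa using this
        exact hyu1 (Walk.eq_of_length_eq_zero (p := P'.takeUntil y hyP') (by omega)).symm
      have hyP : y ∉ (Walk.cons h P').support := by
        rw [Walk.support_cons, List.mem_cons]
        rintro (rfl | hmem)
        · exact H.loopless.irrefl _ hy
        · exact hyP' hmem
      have hext : (Walk.cons hy.symm (Walk.cons h P')).IsPath := hP.cons hyP
      have hfin : (USet H φ (Walk.cons hy.symm (Walk.cons h P'))).Finite :=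
        (Set.finite_Icc 1 t).subset (USet_sub hφ.1 _)
      have hge : USet H φ (Walk.cons h P') ⊆ USet H φ (Walk.cons hy.symm (Walk.cons h P')) := by
        rw [USet_cons (φ := φ) hy.symm]
        exact Set.subset_union_right
      have hcard2 : (USet H φ (Walk.cons hy.symm (Walk.cons h P'))).ncard = N := by
        have hle2 := Set.ncard_le_ncard hge hfin
        have := hNub _ hext
        omega
      have hlast := hLub (Walk.cons hy.symm (Walk.cons h P')) hext hcard2
      rw [Walk.length_cons] at hlast
      omega
    refine ⟨huniq, ?_⟩
    rintro cc ⟨e, he, rfl⟩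
    rw [huniq e he]
    exact (adj_color_mem (φ := φ) h).2

end Graph

end CycProof

open CycProof

/-- Lemma 4: in a cyclically-interval `t`-coloring of a tree, some `TP(b',b'')` receives all
`t` colors. -/
theorem stmt3 {V : Type*} [Fintype V] (H : SimpleGraph V) (hH : H.IsTree)
    (t : ℕ) (φ : Sym2 V → ℕ) (hφ : IsCyclicIntervalColoring H t φ) :
    ∃ (b' b'' : V) (p : H.Walk b' b''), p.IsPath ∧ φ '' pathTP H p = Set.Icc 1 t := by
  classical
  have hconn : H.Connected := hH.1
  rcases Nat.eq_zero_or_pos t with rfl | ht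
  · obtain ⟨x⟩ := hconn.nonempty
    refine ⟨x, x, Walk.nil, Walk.IsPath.nil, ?_⟩
    rw [pathTP, if_pos (by simp)]
    have h1 : {e : Sym2 V | e ∈ (Walk.nil : H.Walk x x).edges} = ∅ := by simp
    rw [h1, Set.image_empty, eq_comm, Set.Icc_eq_empty]
    omega
  · -- a global edge
    obtain ⟨p₀, q₀, hpq⟩ : ∃ p q : V, H.Adj p q := by
      obtain ⟨e, he, -⟩ := hφ.1.2.2 1 ⟨le_rfl, ht⟩
      revert he
      refine Sym2.ind (fun a b he => ⟨a, b, H.mem_edgeSet.mp he⟩) e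
    have hinc : ∀ x, (H.incidenceSet x).Nonempty := incidence_nonempty hconn hpq
    -- maximization
    set NS : Set ℕ := {n | ∃ (x y : V) (q : H.Walk x y), q.IsPath ∧ (USet H φ q).ncard = n}
      with hNS
    have hNSne : NS.Nonempty := by
      obtain ⟨x⟩ := hconn.nonempty
      exact ⟨_, x, x, Walk.nil, Walk.IsPath.nil, rfl⟩
    have hNSbdd : BddAbove NS := by
      refine ⟨t, ?_⟩
      rintro n ⟨x, y, q, hq, rfl⟩
      calc (USet H φ q).ncard ≤ (Set.Icc 1 t).ncard :=
            Set.ncard_le_ncard (USet_sub hφ.1 q) (Set.finite_Icc 1 t)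
        _ = t := by rw [ncard_Icc']; omega
    set N := sSup NS with hN
    have hNub : ∀ {x y : V} (q : H.Walk x y), q.IsPath → (USet H φ q).ncard ≤ N :=
      fun q hq => le_csSup hNSbdd ⟨_, _, q, hq, rfl⟩
    set LS : Set ℕ :=
      {l | ∃ (x y : V) (q : H.Walk x y), q.IsPath ∧ (USet H φ q).ncard = N ∧ q.length = l}
      with hLS
    have hLSne : LS.Nonempty := by
      obtain ⟨x, y, q, hq, hqc⟩ := Nat.sSup_mem hNSne hNSbdd
      exact ⟨q.length, x, y, q, hq, hqc, rfl⟩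
    have hLSbdd : BddAbove LS := by
      refine ⟨Fintype.card V, ?_⟩
      rintro l ⟨x, y, q, hq, _, rfl⟩
      exact le_of_lt hq.length_lt
    set Lm := sSup LS with hLm
    have hLub : ∀ {x y : V} (q : H.Walk x y), q.IsPath → (USet H φ q).ncard = N →
        q.length ≤ Lm := fun q hq hqc => le_csSup hLSbdd ⟨_, _, q, hq, hqc, rfl⟩
    obtain ⟨u, w, P, hP, hPcard, hPlen⟩ := Nat.sSup_mem hLSne hLSbdd
    have hPfin : ∀ {x y : V} (q : H.Walk x y), (USet H φ q).Finite :=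
      fun q => (Set.finite_Icc 1 t).subset (USet_sub hφ.1 q)
    -- full coverage
    have hcover : Set.Icc 1 t ⊆ USet H φ P := by
      by_contra hcov
      rw [Set.not_subset] at hcov
      obtain ⟨c, hcIcc, hcP⟩ := hcov
      obtain ⟨f, hf, hfc⟩ := hφ.1.2.2 c hcIcc
      obtain ⟨z, hz⟩ : ∃ z, c ∈ pal H φ z := by
        revert hf hfc
        refine Sym2.ind (fun a b hf hfc =>
          ⟨a, s(a, b), (H.mk'_mem_incidenceSet_left_iff).mpr (H.mem_edgeSet.mp hf), hfc⟩) f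
      have hzP : z ∉ P.support := fun hzP => hcP ⟨z, hzP, hz⟩
      obtain ⟨q0⟩ := hconn.preconnected z u
      obtain ⟨v, r, hvP, honly, hsub, hrpath'⟩ :=
        exists_prefix {x | x ∈ P.support} (q0.toPath : H.Walk z u) P.start_mem_support
      have hr : r.IsPath := hrpath' q0.toPath.2
      have hvP' : v ∈ P.support := hvP
      have hcr : c ∈ USet H φ r := ⟨z, r.start_mem_support, hz⟩
      -- common contradiction builder for the endpoint cases
      have endcase : ∀ {x y : V} (q : H.Walk x y), q.IsPath → USet H φ P ⊆ USet H φ q →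
          c ∈ USet H φ q → False := by
        intro x y q hq hsub' hcq
        have hlt : (USet H φ P).ncard < (USet H φ q).ncard := by
          apply Set.ncard_lt_ncard ?_ (hPfin q)
          rw [Set.ssubset_def]
          exact ⟨hsub', fun hback => hcP (hback hcq)⟩
        have := hNub q hq
        omega
      by_cases hvu : v = u
      · subst hvu
        refine endcase (r.append P) (isPath_append' hr hP (fun x hx hxP => honly x hx hxP)) ?_ ?_
        · rw [USet_append]
          exact Set.subset_union_right
        · rw [USet_append]
          exact Or.inl hcr
      · by_cases hvw : v = w
        · subst hvw
          refine endcase (P.append r.reverse)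
            (isPath_append' hP hr.reverse (fun x hxP hxr => honly x ?_ hxP)) ?_ ?_
          · rwa [Walk.support_reverse, List.mem_reverse] at hxr
          · rw [USet_append]
            exact Set.subset_union_left
          · rw [USet_append, USet_reverse]
            exact Or.inr hcr
        · -- internal case
          have hP1 : ((P.takeUntil v hvP').append r.reverse).IsPath := by
            refine isPath_append' (hP.takeUntil hvP') hr.reverse (fun x hxT hxr => ?_)
            rw [Walk.support_reverse, List.mem_reverse] at hxr
            exact honly x hxr (P.support_takeUntil_subset hvP' hxT)
          have hP2 : (r.append (P.dropUntil v hvP')).IsPath := by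
            refine isPath_append' hr (hP.dropUntil hvP') (fun x hxr hxD => ?_)
            exact honly x hxr (P.support_dropUntil_subset hvP' hxD)
          obtain ⟨ea, hea⟩ := hinc v
          have ha : φ ea ∈ pal H φ v := ⟨ea, hea, rfl⟩
          have haIcc : 1 ≤ φ ea ∧ φ ea ≤ t := by
            have := pal_sub hφ.1 v ha
            simpa [Set.mem_Icc] using this
          have hUP : USet H φ P = USet H φ (P.takeUntil v hvP') ∪
              USet H φ (P.dropUntil v hvP') := by
            conv_lhs => rw [← Walk.take_spec P hvP']
            rw [USet_append]
          have hLconn := USet_conn hφ hconn hpq (P.takeUntil v hvP') ha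
          have hRconn : ConnA t (φ ea) (USet H φ (P.dropUntil v hvP')) := by
            have := USet_conn hφ hconn hpq (P.dropUntil v hvP').reverse ha
            rwa [USet_reverse] at this
          have hTconn := USet_conn hφ hconn hpq r ha
          have hcIcc' : 1 ≤ c ∧ c ≤ t := by simpa [Set.mem_Icc] using hcIcc
          have hLT : (USet H φ (P.takeUntil v hvP') ∪ USet H φ r).ncard ≤
              (USet H φ (P.takeUntil v hvP') ∪ USet H φ (P.dropUntil v hvP')).ncard := by
            rw [← hUP, hPcard, ← USet_reverse (φ := φ) r, ← USet_append]
            exact hNub _ hP1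
          have hRT : (USet H φ (P.dropUntil v hvP') ∪ USet H φ r).ncard ≤
              (USet H φ (P.takeUntil v hvP') ∪ USet H φ (P.dropUntil v hvP')).ncard := by
            rw [← hUP, hPcard, Set.union_comm, ← USet_append]
            exact hNub _ hP2
          exact circle_main ht haIcc hcIcc'
            (USet_sub hφ.1 _) (USet_sub hφ.1 _) (USet_sub hφ.1 _)
            hLconn hRconn hTconn
            (mem_USet_end _ ha) (mem_USet_start _ ha) (mem_USet_end _ ha)
            hcr (hUP ▸ hcP) hLT hRT
    -- now the endpoint stage
    have hlen1 : 1 ≤ P.length := by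
      by_contra h0
      push_neg at h0
      have hP0 : P.length = 0 := by omega
      obtain ⟨e, he⟩ := hinc u
      obtain ⟨y, hy, rfl⟩ := mem_incidence_struct he
      have hsupP : P.support = [u] := by
        have h3 : P.support.tail.length = 0 := by
          have h2 := P.length_support
          rw [P.support_eq_cons, List.length_cons] at h2
          omega
        rw [P.support_eq_cons, List.eq_nil_of_length_eq_zero h3]
      have hyu : y ∉ P.support := by
        rw [hsupP]
        simp only [List.mem_singleton]
        exact hy.ne'
      have hext : (Walk.cons hy.symm P).IsPath := hP.cons hyu
      have hcard' : (USet H φ (Walk.cons hy.symm P)).ncard = N := by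
        have hsub' : USet H φ P ⊆ USet H φ (Walk.cons hy.symm P) := by
          rw [USet_cons (φ := φ) hy.symm]
          exact Set.subset_union_right
        have h1 := Set.ncard_le_ncard hsub' (hPfin _)
        have h2 := hNub _ hext
        omega
      have hlast := hLub (Walk.cons hy.symm P) hext hcard'
      rw [Walk.length_cons] at hlast
      omega
    obtain ⟨u1, h01, P', hPeq, huniq, hpalu⟩ :=
      end_step hH hφ hNub hLub P hP hPcard hPlen hlen1
    obtain ⟨w1, h01', Q', hQeq, huniqw, hpalw⟩ :=
      end_step hH hφ hNub hLub P.reverse hP.reverse (by rwa [USet_reverse])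
        (by rwa [Walk.length_reverse]) (by rwa [Walk.length_reverse])
    have hP'path : P'.IsPath ∧ u ∉ P'.support := by
      rw [hPeq, Walk.cons_isPath_iff] at hP
      exact hP
    have hQ'path : Q'.IsPath ∧ w ∉ Q'.support := by
      have := hP.reverse
      rw [hQeq, Walk.cons_isPath_iff] at this
      exact this
    by_cases hL2 : 2 ≤ P.length
    · have hu1mem : u1 ∈ P.support := by
        rw [hPeq, Walk.support_cons]
        exact List.mem_cons_of_mem _ P'.start_mem_support
      have hu1u : u1 ≠ u := fun h => hP'path.2 (h ▸ P'.start_mem_support)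
      have hu1w : u1 ≠ w := by
        intro h
        subst h
        have : P' = Walk.nil := Walk.isPath_iff_eq_nil.mp hP'path.1
        rw [hPeq, this] at hL2
        simp at hL2
      have hw1mem : w1 ∈ P.support := by
        have : w1 ∈ P.reverse.support := by
          rw [hQeq, Walk.support_cons]
          exact List.mem_cons_of_mem _ Q'.start_mem_support
        rwa [Walk.support_reverse, List.mem_reverse] at this
      have hw1w : w1 ≠ w := fun h => hQ'path.2 (h ▸ Q'.start_mem_support)
      have hw1u : w1 ≠ u := by
        intro h
        subst h
        have : Q' = Walk.nil := Walk.isPath_iff_eq_nil.mp hQ'path.1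
        have hrl := congrArg Walk.length hQeq
        rw [this, Walk.length_reverse] at hrl
        simp at hrl
        omega
      refine ⟨u, w, P, hP, ?_⟩
      rw [pathTP, if_neg (by omega)]
      apply Set.Subset.antisymm
      · rintro cc ⟨e, he, rfl⟩
        simp only [Set.mem_iUnion, Set.mem_setOf_eq] at he
        obtain ⟨x, _, hex⟩ := he
        exact hφ.1.1 e hex.1
      · intro c hc
        obtain ⟨x, hxsup, hcpal⟩ := hcover hc
        have hfind : ∃ x', (x' ∈ P.support ∧ x' ≠ u ∧ x' ≠ w) ∧ c ∈ pal H φ x' := by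
          by_cases hxu : x = u
          · exact ⟨u1, ⟨hu1mem, hu1u, hu1w⟩, hpalu (hxu ▸ hcpal)⟩
          · by_cases hxw : x = w
            · exact ⟨w1, ⟨hw1mem, hw1u, hw1w⟩, hpalw (hxw ▸ hcpal)⟩
            · exact ⟨x, ⟨hxsup, hxu, hxw⟩, hcpal⟩
        obtain ⟨x', hx', e, he, hfe⟩ := hfind
        refine ⟨e, ?_, hfe⟩
        simp only [Set.mem_iUnion, Set.mem_setOf_eq]
        exact ⟨x', hx', he⟩
    · -- length 1
      have hL1 : P.length = 1 := by omega
      have hPlen' : P'.length = 0 := by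
        have := congrArg Walk.length hPeq
        rw [Walk.length_cons] at this
        omega
      have hQlen' : Q'.length = 0 := by
        have := congrArg Walk.length hQeq
        rw [Walk.length_cons, Walk.length_reverse] at this
        omega
      have hu1w : u1 = w := Walk.eq_of_length_eq_zero (p := P') hPlen'
      have hw1u : w1 = u := Walk.eq_of_length_eq_zero (p := Q') hQlen'
      have hedge_eq : s(w, w1) = s(u, u1) := by
        rw [hu1w, hw1u]
        exact Sym2.eq_swap
      have hpalu_sub : pal H φ u ⊆ {φ s(u, u1)} := by
        rintro cc ⟨e, he, rfl⟩
        rw [huniq e he]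
        rfl
      have hpalw_sub : pal H φ w ⊆ {φ s(u, u1)} := by
        rintro cc ⟨e, he, rfl⟩
        rw [huniqw e he, hedge_eq]
        rfl
      have hsupP' : P'.support = [u1] := by
        have h3 : P'.support.tail.length = 0 := by
          have h2 := P'.length_support
          rw [P'.support_eq_cons, List.length_cons] at h2
          omega
        rw [P'.support_eq_cons, List.eq_nil_of_length_eq_zero h3]
      have hIccsub : Set.Icc 1 t ⊆ {φ s(u, u1)} := by
        intro c hc
        obtain ⟨x, hx, hcp⟩ := hcover hc
        rw [hPeq, Walk.support_cons, hsupP'] at hx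
        simp only [List.mem_cons, List.mem_singleton, List.not_mem_nil, or_false] at hx
        rcases hx with rfl | rfl
        · exact hpalu_sub hcp
        · rw [hu1w] at hcp
          exact hpalw_sub hcp
      have ht1 : t = 1 := by
        have h1 := hIccsub (Set.mem_Icc.mpr ⟨le_rfl, ht⟩)
        have h2 := hIccsub (Set.mem_Icc.mpr ⟨ht, le_rfl⟩)
        simp only [Set.mem_singleton_iff] at h1 h2
        omega
      have hφe : φ s(u, u1) = 1 := by
        have h1 := hIccsub (Set.mem_Icc.mpr ⟨le_rfl, ht⟩)
        simp only [Set.mem_singleton_iff] at h1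
        omega
      refine ⟨u, w, P, hP, ?_⟩
      rw [pathTP, if_pos (by omega)]
      have hedges : {e : Sym2 V | e ∈ P.edges} = {s(u, u1)} := by
        have hPedges : P.edges = [s(u, u1)] := by
          rw [hPeq, Walk.edges_cons]
          have : P'.edges = [] := by
            apply List.eq_nil_of_length_eq_zero
            rw [Walk.length_edges]
            exact hPlen'
          rw [this]
        rw [hPedges]
        ext e
        simp
      rw [hedges, Set.image_singleton, hφe, ht1, Set.Icc_self]
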